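/- Let G1=(V1,E1,ℓ1), G2=(V2,E2,ℓ2), G3=(V3,E3,ℓ3) be finite acyclic labeled graphs with single-character vertex labels, and let v1∈V1, v2∈V2, v3∈V3 with ℓ1(v1)=ℓ2(v2)=ℓ3(v3). If v1 and v2 each have at least one in-coming edge and v3 has no in-coming edges, then D(v1,v2,v3) = 1 + max{ L(u1,u2) : (u1,v1)∈E1, (u2,v2)∈E2 }. -/

import Mathlib

open List Relation

section Defs

variable {V V1 V2 V3 α : Type*}

/-- A (directed) path: a nonempty list of vertices, consecutive ones joined by edges. -/
def IsPath (E : V → V → Prop) (p : List V) : Prop :=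
  p ≠ [] ∧ p.Chain' E

/-- Paths ending at `v` (the set `P(v)`). -/
def EndsAt (E : V → V → Prop) (v : V) (p : List V) : Prop :=
  IsPath E p ∧ p.getLast? = some v

/-- A path is left-maximal if its first vertex has no in-coming edges. -/
def LeftMax (E : V → V → Prop) (p : List V) : Prop :=
  ∀ w u, p.head? = some w → ¬ E u w

/-- A path is right-maximal if its last vertex has no out-going edges. -/
def RightMax (E : V → V → Prop) (p : List V) : Prop :=
  ∀ w u, p.getLast? = some w → ¬ E w u

/-- `Subseq(ℓ(P(v)))`: subsequences of label strings of paths ending at `v`. -/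
def SubseqAt (E : V → V → Prop) (ℓ : V → α) (v : V) : Set (List α) :=
  {z | ∃ p, EndsAt E v p ∧ z.Sublist (p.map ℓ)}

/-- `Subseq(ℓ(LMP(v)))`: subsequences of label strings of left-maximal paths ending at `v`. -/
def SubseqLM (E : V → V → Prop) (ℓ : V → α) (v : V) : Set (List α) :=
  {z | ∃ p, EndsAt E v p ∧ LeftMax E p ∧ z.Sublist (p.map ℓ)}

/-- `Subseq(G)`: subsequences of label strings of all paths of `G`. -/
def SubseqG (E : V → V → Prop) (ℓ : V → α) : Set (List α) :=
  {z | ∃ p, IsPath E p ∧ z.Sublist (p.map ℓ)}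

/-- A graph is acyclic if no vertex lies on a nonempty cycle. -/
def Acyclic (E : V → V → Prop) : Prop :=
  ∀ v, ¬ Relation.TransGen E v v

/-- The set `S_IC(v1,v2,v3)`. -/
def SIC (E1 : V1 → V1 → Prop) (ℓ1 : V1 → α) (E2 : V2 → V2 → Prop) (ℓ2 : V2 → α)
    (E3 : V3 → V3 → Prop) (ℓ3 : V3 → α) (v1 : V1) (v2 : V2) (v3 : V3) :
    Set (List α) :=
  {z | (∃ q, EndsAt E3 v3 q ∧ LeftMax E3 q ∧ (q.map ℓ3).Sublist z) ∧
       z ∈ SubseqAt E1 ℓ1 v1 ∧ z ∈ SubseqAt E2 ℓ2 v2}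

/-- Maximum length of a string in `S`, with `⊥` (= −∞) for `S = ∅`. -/
noncomputable def maxLen (S : Set (List α)) : WithBot ℕ :=
  sSup ((fun z : List α => (z.length : WithBot ℕ)) '' S)

/-- `L(v1,v2)`: the maximum length of a common subsequence (as a natural number). -/
noncomputable def Lval (E1 : V1 → V1 → Prop) (ℓ1 : V1 → α)
    (E2 : V2 → V2 → Prop) (ℓ2 : V2 → α) (v1 : V1) (v2 : V2) : ℕ :=
  sSup {n | ∃ z ∈ SubseqAt E1 ℓ1 v1 ∩ SubseqAt E2 ℓ2 v2, n = z.length}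

/-- `D(v1,v2,v3)`: the maximum length of a string in `S_IC(v1,v2,v3)`, `−∞` if empty. -/
noncomputable def Dval (E1 : V1 → V1 → Prop) (ℓ1 : V1 → α) (E2 : V2 → V2 → Prop) (ℓ2 : V2 → α)
    (E3 : V3 → V3 → Prop) (ℓ3 : V3 → α) (v1 : V1) (v2 : V2) (v3 : V3) : WithBot ℕ :=
  maxLen (SIC E1 ℓ1 E2 ℓ2 E3 ℓ3 v1 v2 v3)

end Defs


section Aux

variable {V V1 V2 α : Type*}

lemma chain'_nodup {E : V → V → Prop} (hE : Acyclic E) {p : List V}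
    (hp : p.Chain' E) : p.Nodup := by
  haveI : IsTrans V (Relation.TransGen E) := ⟨fun _ _ _ => Relation.TransGen.trans⟩
  have h1 : p.Chain' (Relation.TransGen E) :=
    hp.imp (fun a b h => Relation.TransGen.single h)
  have h2 : p.Pairwise (Relation.TransGen E) := List.isChain_iff_pairwise.mp h1
  exact h2.imp (fun {a b} h => by rintro rfl; exact hE a h)

lemma subseq_len_le [Fintype V] {E : V → V → Prop} {ℓ : V → α} (hE : Acyclic E) {v : V}
    {z : List α} (hz : z ∈ SubseqAt E ℓ v) : z.length ≤ Fintype.card V := by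
  obtain ⟨p, hp, hs⟩ := hz
  calc z.length ≤ (p.map ℓ).length := hs.length_le
    _ = p.length := by simp
    _ ≤ _ := (chain'_nodup hE hp.1.2).length_le_card

lemma sublist_dropLast_concat {z q : List α} {b : α} (h : z.Sublist (q ++ [b])) :
    z.dropLast.Sublist q := by
  rw [List.sublist_append_iff] at h
  obtain ⟨z1, z2, rfl, h1, h2⟩ := h
  rcases z2 with _ | ⟨a, z2⟩
  · simpa using (List.dropLast_sublist z1).trans h1
  · have hz2 : z2 = [] := by
      have := h2.length_le
      simp at this
      exact this
    have ha : a = b := by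
      have : a ∈ [b] := h2.subset (List.mem_cons_self)
      simpa using this
    subst hz2; subst ha
    rw [List.dropLast_concat]
    exact h1

lemma nil_mem_subseqAt {E : V → V → Prop} {ℓ : V → α} (u : V) :
    ([] : List α) ∈ SubseqAt E ℓ u :=
  ⟨[u], ⟨⟨by simp, List.isChain_singleton u⟩, rfl⟩, List.nil_sublist _⟩

lemma subseqAt_extend {E : V → V → Prop} {ℓ : V → α} {u v : V} {z : List α}
    (hz : z ∈ SubseqAt E ℓ u) (huv : E u v) : z ++ [ℓ v] ∈ SubseqAt E ℓ v := by
  obtain ⟨p, ⟨⟨hne, hch⟩, hlast⟩, hs⟩ := hz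
  refine ⟨p ++ [v], ⟨⟨by simp, ?_⟩, List.getLast?_concat⟩, ?_⟩
  · rw [show List.Chain' E (p ++ [v]) = List.IsChain E (p ++ [v]) from rfl, List.isChain_append]
    refine ⟨hch, List.isChain_singleton v, fun x hx y hy => ?_⟩
    rw [hlast] at hx
    simp at hx hy
    subst hx; subst hy; exact huv
  · rw [List.map_append]
    exact hs.append (List.Sublist.refl _)

lemma subseqAt_peel {E : V → V → Prop} {ℓ : V → α} {v : V} {z : List α}
    (hz : z ∈ SubseqAt E ℓ v) :
    z.length ≤ 1 ∨ ∃ u, E u v ∧ z.dropLast ∈ SubseqAt E ℓ u := by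
  obtain ⟨p, ⟨⟨hne, hch⟩, hlast⟩, hs⟩ := hz
  have hgl : p.getLast hne = v := by
    rw [List.getLast?_eq_getLast hne] at hlast
    exact Option.some.inj hlast
  have hp : p.dropLast ++ [v] = p := by rw [← hgl]; exact List.dropLast_append_getLast hne
  rcases eq_or_ne p.dropLast [] with h0 | h0
  · left
    have hpv : p = [v] := by rw [← hp, h0]; rfl
    rw [hpv] at hs
    simpa using hs.length_le
  · right
    set q := p.dropLast with hq
    have hch' : List.Chain' E (q ++ [v]) := by rw [hp]; exact hch
    rw [show List.Chain' E (q ++ [v]) = List.IsChain E (q ++ [v]) from rfl, List.isChain_append] at hch'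
    obtain ⟨hcq, -, hrel⟩ := hch'
    have hE : E (q.getLast h0) v := by
      exact hrel _ (by rw [List.getLast?_eq_getLast h0]; simp) v (by simp)
    refine ⟨q.getLast h0, hE, ⟨q, ⟨⟨h0, hcq⟩, List.getLast?_eq_getLast h0⟩, ?_⟩⟩
    have : z.Sublist (q.map ℓ ++ [ℓ v]) := by
      have : (q.map ℓ ++ [ℓ v]) = p.map ℓ := by rw [← hp]; simp
      rw [this]; exact hs
    exact sublist_dropLast_concat this

end Aux

/-- In finite acyclic graphs with `ℓ1(v1) = ℓ2(v2) = ℓ3(v3)`: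
if `v1` and `v2` each have an in-coming edge and `v3` has none, then
`D(v1,v2,v3) = 1 + max{ L(u1,u2) : (u1,v1) ∈ E1, (u2,v2) ∈ E2 }`. -/
theorem stmt9 {V1 V2 V3 α : Type*} [Fintype V1] [Fintype V2] [Fintype V3]
    (E1 : V1 → V1 → Prop) (ℓ1 : V1 → α) (E2 : V2 → V2 → Prop) (ℓ2 : V2 → α)
    (E3 : V3 → V3 → Prop) (ℓ3 : V3 → α)
    (h1 : Acyclic E1) (h2 : Acyclic E2) (h3 : Acyclic E3)
    (v1 : V1) (v2 : V2) (v3 : V3)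
    (hl12 : ℓ1 v1 = ℓ2 v2) (hl23 : ℓ2 v2 = ℓ3 v3)
    (hv1 : ∃ u, E1 u v1) (hv2 : ∃ u, E2 u v2) (hv3 : ∀ u, ¬ E3 u v3) :
    Dval E1 ℓ1 E2 ℓ2 E3 ℓ3 v1 v2 v3 =
      1 + sSup {d : WithBot ℕ | ∃ u1 u2, E1 u1 v1 ∧ E2 u2 v2 ∧
        d = (Lval E1 ℓ1 E2 ℓ2 u1 u2 : ℕ)} := by
  classical
  have hLne : ∀ (u1 : V1) (u2 : V2),
      {n | ∃ z ∈ SubseqAt E1 ℓ1 u1 ∩ SubseqAt E2 ℓ2 u2, n = z.length}.Nonempty :=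
    fun u1 u2 => ⟨0, [], ⟨nil_mem_subseqAt u1, nil_mem_subseqAt u2⟩, rfl⟩
  have hLbdd : ∀ (u1 : V1) (u2 : V2),
      BddAbove {n | ∃ z ∈ SubseqAt E1 ℓ1 u1 ∩ SubseqAt E2 ℓ2 u2, n = z.length} := by
    intro u1 u2
    refine ⟨Fintype.card V1, fun n hn => ?_⟩
    obtain ⟨z, ⟨hz1, -⟩, rfl⟩ := hn
    exact subseq_len_le h1 hz1
  have hL_le : ∀ u1 u2 (z : List α), z ∈ SubseqAt E1 ℓ1 u1 → z ∈ SubseqAt E2 ℓ2 u2 →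
      z.length ≤ Lval E1 ℓ1 E2 ℓ2 u1 u2 :=
    fun u1 u2 z hz1 hz2 => le_csSup (hLbdd u1 u2) ⟨z, ⟨hz1, hz2⟩, rfl⟩
  have hLcard : ∀ u1 u2, Lval E1 ℓ1 E2 ℓ2 u1 u2 ≤ Fintype.card V1 := fun u1 u2 =>
    csSup_le (hLne u1 u2)
      (fun n hn => by obtain ⟨z, ⟨hz1, -⟩, rfl⟩ := hn; exact subseq_len_le h1 hz1)
  have hL_mem : ∀ u1 u2, ∃ z ∈ SubseqAt E1 ℓ1 u1 ∩ SubseqAt E2 ℓ2 u2,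
      z.length = Lval E1 ℓ1 E2 ℓ2 u1 u2 := by
    intro u1 u2
    obtain ⟨z, hz, hlen⟩ := Nat.sSup_mem (hLne u1 u2) (hLbdd u1 u2)
    exact ⟨z, hz, hlen.symm⟩
  set A : Set ℕ := {n | ∃ u1 u2, E1 u1 v1 ∧ E2 u2 v2 ∧ n = Lval E1 ℓ1 E2 ℓ2 u1 u2} with hA
  obtain ⟨w1, hw1⟩ := hv1
  obtain ⟨w2, hw2⟩ := hv2
  have hAne : A.Nonempty := ⟨_, w1, w2, hw1, hw2, rfl⟩
  have hAbdd : BddAbove A := by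
    refine ⟨Fintype.card V1, fun n hn => ?_⟩
    obtain ⟨u1, u2, -, -, rfl⟩ := hn
    exact hLcard u1 u2
  set N := sSup A with hN
  obtain ⟨a1, a2, ha1, ha2, haN⟩ := Nat.sSup_mem hAne hAbdd
  have hRHS : sSup {d : WithBot ℕ | ∃ u1 u2, E1 u1 v1 ∧ E2 u2 v2 ∧
      d = (Lval E1 ℓ1 E2 ℓ2 u1 u2 : ℕ)} = (N : WithBot ℕ) := by
    apply IsGreatest.csSup_eq
    constructor
    · exact ⟨a1, a2, ha1, ha2, by exact_mod_cast haN⟩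
    · rintro d ⟨u1, u2, hu1, hu2, rfl⟩
      exact_mod_cast le_csSup hAbdd ⟨u1, u2, hu1, hu2, rfl⟩
  have hLHS : Dval E1 ℓ1 E2 ℓ2 E3 ℓ3 v1 v2 v3 = ((N + 1 : ℕ) : WithBot ℕ) := by
    unfold Dval maxLen
    apply IsGreatest.csSup_eq
    constructor
    · obtain ⟨z0, ⟨hz01, hz02⟩, hz0len⟩ := hL_mem a1 a2
      refine ⟨z0 ++ [ℓ1 v1], ⟨⟨[v3], ⟨⟨by simp, List.isChain_singleton v3⟩, rfl⟩,
        ?_, ?_⟩, ?_, ?_⟩, ?_⟩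
      · intro w u hw
        simp only [List.head?_cons, Option.some.injEq] at hw
        subst hw
        exact hv3 u
      · have h3 : ℓ3 v3 = ℓ1 v1 := by rw [← hl23, ← hl12]
        simp only [List.map, h3]
        exact List.sublist_append_right z0 [ℓ1 v1]
      · exact subseqAt_extend hz01 ha1
      · rw [hl12]; exact subseqAt_extend hz02 ha2
      · have : (z0 ++ [ℓ1 v1]).length = N + 1 := by
          simp [hz0len, ← haN]
          exact hN.symm
        exact_mod_cast congrArg _ this
    · rintro m ⟨z, ⟨⟨q, hq, -, hqs⟩, hz1, hz2⟩, rfl⟩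
      have hb : z.length ≤ N + 1 := by
        rcases subseqAt_peel hz1 with hle | ⟨u1, hu1, hd1⟩
        · omega
        rcases subseqAt_peel hz2 with hle | ⟨u2, hu2, hd2⟩
        · omega
        have h3 : z.dropLast.length ≤ Lval E1 ℓ1 E2 ℓ2 u1 u2 := hL_le u1 u2 _ hd1 hd2
        have h4 : Lval E1 ℓ1 E2 ℓ2 u1 u2 ≤ N := le_csSup hAbdd ⟨u1, u2, hu1, hu2, rfl⟩
        have h5 := z.length_dropLast
        omega
      show (z.length : WithBot ℕ) ≤ ((N + 1 : ℕ) : WithBot ℕ)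
      exact_mod_cast hb
  rw [hLHS, hRHS]
  rw [show (N + 1 : ℕ) = 1 + N by omega]
  push_cast
  rfl
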